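/- arXiv:2510.16927 — 2 statements merged into one kernel-verified Lean document; each statement's English description precedes it below -/
import Mathlib

section
/- Let X ∈ ℝ^{L×d_V} with every row standard deviation σ_i(X) positive, let Y = LayerNorm(X), and let W₁ ∈ ℝ^{d_V×d_ff}, W₂ ∈ ℝ^{d_ff×d_V}. Then S = Y + ReLU(Y·W₁)·W₂ satisfies ‖S‖₂ ≤ sqrt(L·d_V)·(1 + sqrt(min(L, d_ff))·‖W₁‖₂·‖W₂‖₂). -/
noncomputable section

open Matrix

attribute [local instance] Matrix.frobeniusNormedAddCommGroup Matrix.frobeniusNormedSpace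

/-- Frobenius norm of a real matrix. -/
def frob {m n : ℕ} (A : Matrix (Fin m) (Fin n) ℝ) : ℝ :=
  Real.sqrt (∑ i, ∑ j, A i j ^ 2)

/-- Spectral norm (largest singular value) of a real matrix: the operator norm of the
associated linear map between Euclidean spaces. -/
def spec {m n : ℕ} (A : Matrix (Fin m) (Fin n) ℝ) : ℝ :=
  ‖LinearMap.toContinuousLinearMap (Matrix.toEuclideanLin A)‖

/-- Centering matrix `C = Iₙ - (1/n)·𝟙𝟙ᵀ`. -/
def centerC (n : ℕ) : Matrix (Fin n) (Fin n) ℝ :=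
  1 - (n : ℝ)⁻¹ • Matrix.of (fun _ _ => (1 : ℝ))

/-- Row-centered matrix `M(X) = X·C`. -/
def centered {m n : ℕ} (X : Matrix (Fin m) (Fin n) ℝ) : Matrix (Fin m) (Fin n) ℝ :=
  X * centerC n

/-- Row standard deviations `σᵢ(X) = sqrt((1/n)·Σⱼ M(X)ᵢⱼ²)`. -/
def rowSigma {m n : ℕ} (X : Matrix (Fin m) (Fin n) ℝ) (i : Fin m) : ℝ :=
  Real.sqrt ((n : ℝ)⁻¹ * ∑ j, centered X i j ^ 2)

/-- `P(X) = diag(σ₁(X),…,σ_m(X))⁻¹`. -/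
def Pmat {m n : ℕ} (X : Matrix (Fin m) (Fin n) ℝ) : Matrix (Fin m) (Fin m) ℝ :=
  Matrix.diagonal fun i => (rowSigma X i)⁻¹

/-- `LayerNorm(X) = P(X)·M(X)`. -/
def layerNorm {m n : ℕ} (X : Matrix (Fin m) (Fin n) ℝ) : Matrix (Fin m) (Fin n) ℝ :=
  Pmat X * centered X

/-- Entrywise ReLU of a matrix: `ReLU(X)ᵢⱼ = max(0, Xᵢⱼ)`. -/
def reluM {m n : ℕ} (X : Matrix (Fin m) (Fin n) ℝ) : Matrix (Fin m) (Fin n) ℝ :=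
  Matrix.of fun i j => max 0 (X i j)


section Aux

lemma spec_nonneg' {m n : ℕ} (A : Matrix (Fin m) (Fin n) ℝ) : 0 ≤ spec A := norm_nonneg _

lemma spec_eq_l2 {m n : ℕ} (A : Matrix (Fin m) (Fin n) ℝ) :
    spec A = @norm _ (Matrix.instL2OpNormedAddCommGroup).toNorm A := rfl

lemma spec_transpose {m n : ℕ} (A : Matrix (Fin m) (Fin n) ℝ) : spec Aᵀ = spec A := by
  rw [spec_eq_l2, spec_eq_l2, ← Matrix.conjTranspose_eq_transpose_of_trivial]
  exact Matrix.l2_opNorm_conjTranspose A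

lemma spec_add_le' {m n : ℕ} (A B : Matrix (Fin m) (Fin n) ℝ) :
    spec (A + B) ≤ spec A + spec B := by
  unfold spec
  rw [map_add, map_add]
  exact norm_add_le _ _

lemma spec_mul_le' {m n k : ℕ} (A : Matrix (Fin m) (Fin n) ℝ) (B : Matrix (Fin n) (Fin k) ℝ) :
    spec (A * B) ≤ spec A * spec B := by
  rw [spec_eq_l2, spec_eq_l2, spec_eq_l2]
  exact Matrix.l2_opNorm_mul A B

lemma euclid_norm' {n : ℕ} (v : Fin n → ℝ) :
    ‖(WithLp.equiv 2 (Fin n → ℝ)).symm v‖ = Real.sqrt (∑ j, v j ^ 2) := by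
  rw [EuclideanSpace.norm_eq]
  congr 1
  refine Finset.sum_congr rfl fun j _ => ?_
  simp [Real.norm_eq_abs, sq_abs]

lemma Matrix.toEuclideanLin_apply_piLp_equiv_symm {m n : ℕ} (M : Matrix (Fin m) (Fin n) ℝ)
    (v : Fin n → ℝ) :
    Matrix.toEuclideanLin M ((WithLp.equiv 2 (Fin n → ℝ)).symm v) =
      (WithLp.equiv 2 (Fin m → ℝ)).symm (M *ᵥ v) := rfl

lemma spec_le_frob {m n : ℕ} (A : Matrix (Fin m) (Fin n) ℝ) : spec A ≤ frob A := by
  refine ContinuousLinearMap.opNorm_le_bound _ (Real.sqrt_nonneg _) fun x => ?_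
  have hx : x = (WithLp.equiv 2 (Fin n → ℝ)).symm (WithLp.equiv 2 (Fin n → ℝ) x) := rfl
  set v : Fin n → ℝ := WithLp.equiv 2 (Fin n → ℝ) x with hv
  rw [LinearMap.coe_toContinuousLinearMap']
  rw [hx, Matrix.toEuclideanLin_apply_piLp_equiv_symm, euclid_norm', euclid_norm']
  rw [frob, ← Real.sqrt_mul (by positivity)]
  apply Real.sqrt_le_sqrt
  rw [Finset.sum_mul]
  refine Finset.sum_le_sum fun i _ => ?_
  have hcs := Finset.sum_mul_sq_le_sq_mul_sq Finset.univ (fun j => A i j) v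
  simpa [Matrix.mulVec, dotProduct] using hcs

lemma mulVec_sq_le {m n : ℕ} (A : Matrix (Fin m) (Fin n) ℝ) (v : Fin n → ℝ) :
    ∑ i, (A.mulVec v i) ^ 2 ≤ spec A ^ 2 * ∑ j, v j ^ 2 := by
  have h := (LinearMap.toContinuousLinearMap (Matrix.toEuclideanLin A)).le_opNorm
    ((WithLp.equiv 2 (Fin n → ℝ)).symm v)
  rw [LinearMap.coe_toContinuousLinearMap'] at h
  rw [Matrix.toEuclideanLin_apply_piLp_equiv_symm, euclid_norm', euclid_norm'] at h
  have h2 := mul_self_le_mul_self (Real.sqrt_nonneg _) h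
  rw [Real.mul_self_sqrt (by positivity)] at h2
  calc ∑ i, (A.mulVec v i) ^ 2 ≤ (spec A * Real.sqrt (∑ j, v j ^ 2)) *
        (spec A * Real.sqrt (∑ j, v j ^ 2)) := h2
    _ = spec A ^ 2 * ∑ j, v j ^ 2 := by
        rw [mul_mul_mul_comm, Real.mul_self_sqrt (by positivity)]; ring

lemma frob_mul_le {m n k : ℕ} (A : Matrix (Fin m) (Fin n) ℝ) (B : Matrix (Fin n) (Fin k) ℝ) :
    frob (A * B) ≤ frob A * spec B := by
  have key : ∑ i, ∑ j, (A * B) i j ^ 2 ≤ (∑ i, ∑ l, A i l ^ 2) * spec Bᵀ ^ 2 := by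
    rw [Finset.sum_mul]
    refine Finset.sum_le_sum fun i _ => ?_
    calc ∑ j, (A * B) i j ^ 2 = ∑ j, (Bᵀ.mulVec (A i)) j ^ 2 := by
          refine Finset.sum_congr rfl fun j _ => ?_
          simp [Matrix.mul_apply, Matrix.mulVec, dotProduct, Matrix.transpose_apply, mul_comm]
      _ ≤ spec Bᵀ ^ 2 * ∑ l, A i l ^ 2 := mulVec_sq_le _ _
      _ = (∑ l, A i l ^ 2) * spec Bᵀ ^ 2 := mul_comm _ _
  calc frob (A * B) ≤ Real.sqrt ((∑ i, ∑ l, A i l ^ 2) * spec Bᵀ ^ 2) :=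
        Real.sqrt_le_sqrt key
    _ = frob A * spec B := by
        rw [Real.sqrt_mul (by positivity), Real.sqrt_sq (spec_nonneg' _), spec_transpose, frob]

lemma frob_relu_le {m n : ℕ} (A : Matrix (Fin m) (Fin n) ℝ) : frob (reluM A) ≤ frob A := by
  apply Real.sqrt_le_sqrt
  refine Finset.sum_le_sum fun i _ => Finset.sum_le_sum fun j _ => ?_
  have h1 : reluM A i j ≤ |A i j| := by
    simp only [reluM, Matrix.of_apply]
    exact max_le (abs_nonneg _) (le_abs_self _)
  have h2 : -|A i j| ≤ reluM A i j := by
    simp only [reluM, Matrix.of_apply]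
    exact le_trans (neg_nonpos.2 (abs_nonneg _)) (le_max_left _ _)
  calc reluM A i j ^ 2 ≤ |A i j| ^ 2 := sq_le_sq' h2 h1
    _ = A i j ^ 2 := sq_abs _

lemma frob_layerNorm {L dV : ℕ} (X : Matrix (Fin L) (Fin dV) ℝ) (hσ : ∀ i, 0 < rowSigma X i)
    (hdV : 0 < dV) : frob (layerNorm X) = Real.sqrt ((L : ℝ) * dV) := by
  unfold frob
  congr 1
  have hrow : ∀ i, ∑ j, layerNorm X i j ^ 2 = (dV : ℝ) := by
    intro i
    have hLN : ∀ j, layerNorm X i j = (rowSigma X i)⁻¹ * centered X i j := by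
      intro j
      simp [layerNorm, Pmat, Matrix.diagonal_mul]
    have hs : rowSigma X i ^ 2 = (dV : ℝ)⁻¹ * ∑ j, centered X i j ^ 2 :=
      Real.sq_sqrt (by positivity)
    have hS : ∑ j, centered X i j ^ 2 = (dV : ℝ) * rowSigma X i ^ 2 := by
      rw [hs, ← mul_assoc, mul_inv_cancel₀ (by positivity : (dV:ℝ) ≠ 0), one_mul]
    calc ∑ j, layerNorm X i j ^ 2 = (rowSigma X i)⁻¹ ^ 2 * ∑ j, centered X i j ^ 2 := by
          rw [Finset.mul_sum]; exact Finset.sum_congr rfl fun j _ => by rw [hLN, mul_pow]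
      _ = (rowSigma X i)⁻¹ ^ 2 * ((dV : ℝ) * rowSigma X i ^ 2) := by rw [hS]
      _ = (dV : ℝ) := by
          have hne : rowSigma X i ≠ 0 := ne_of_gt (hσ i)
          field_simp
  rw [Finset.sum_congr rfl fun i _ => hrow i]
  simp [mul_comm]

lemma spec_zero_rows {n : ℕ} (A : Matrix (Fin 0) (Fin n) ℝ) : spec A = 0 := by
  refine le_antisymm (ContinuousLinearMap.opNorm_le_bound _ le_rfl fun x => ?_) (spec_nonneg' A)
  have hx : x = (WithLp.equiv 2 (Fin n → ℝ)).symm (WithLp.equiv 2 (Fin n → ℝ) x) := rfl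
  rw [LinearMap.coe_toContinuousLinearMap', hx,
    Matrix.toEuclideanLin_apply_piLp_equiv_symm, euclid_norm']
  simp

end Aux

/-- For `Y = LayerNorm(X)` (with positive row standard deviations),
`S = Y + ReLU(Y·W₁)·W₂` satisfies
`‖S‖₂ ≤ sqrt(L·d_V)·(1 + sqrt(min(L, d_ff))·‖W₁‖₂·‖W₂‖₂)`. -/
theorem residual_stream_spectral_bound {L dV dff : ℕ}
    (X : Matrix (Fin L) (Fin dV) ℝ) (hσ : ∀ i, 0 < rowSigma X i)
    (W1 : Matrix (Fin dV) (Fin dff) ℝ) (W2 : Matrix (Fin dff) (Fin dV) ℝ) :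
    spec (layerNorm X + reluM (layerNorm X * W1) * W2) ≤
      Real.sqrt ((L : ℝ) * dV) *
        (1 + Real.sqrt (min (L : ℝ) dff) * spec W1 * spec W2) :=
  by
  rcases Nat.eq_zero_or_pos L with hL | hL
  · subst hL
    rw [spec_zero_rows]
    simp
  rcases Nat.eq_zero_or_pos dV with hdV | hdV
  · exfalso
    subst hdV
    have := hσ ⟨0, hL⟩
    simp [rowSigma] at this
  have hY := frob_layerNorm X hσ hdV
  have hw1 : 0 ≤ spec W1 := spec_nonneg' _
  have hw2 : 0 ≤ spec W2 := spec_nonneg' _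
  have hfY : 0 ≤ frob (layerNorm X) := Real.sqrt_nonneg _
  rcases Nat.eq_zero_or_pos dff with hdff | hdff
  · subst hdff
    have hzero : reluM (layerNorm X * W1) * W2 = 0 := by
      ext i j
      simp [Matrix.mul_apply]
    rw [hzero, add_zero]
    have hmin : min (L : ℝ) ((0:ℕ) : ℝ) = 0 := by
      simp [min_eq_right, Nat.cast_nonneg]
    rw [hmin]
    simpa using le_trans (spec_le_frob _) (le_of_eq hY)
  · -- main case
    have h1 : spec (layerNorm X + reluM (layerNorm X * W1) * W2) ≤
        frob (layerNorm X) + frob (layerNorm X) * spec W1 * spec W2 := by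
      refine le_trans (spec_add_le' _ _) (add_le_add (spec_le_frob _) ?_)
      calc spec (reluM (layerNorm X * W1) * W2)
          ≤ spec (reluM (layerNorm X * W1)) * spec W2 := spec_mul_le' _ _
        _ ≤ frob (reluM (layerNorm X * W1)) * spec W2 := by
            exact mul_le_mul_of_nonneg_right (spec_le_frob _) hw2
        _ ≤ frob (layerNorm X * W1) * spec W2 :=
            mul_le_mul_of_nonneg_right (frob_relu_le _) hw2
        _ ≤ frob (layerNorm X) * spec W1 * spec W2 :=
            mul_le_mul_of_nonneg_right (frob_mul_le _ _) hw2
    have hmin1 : (1:ℝ) ≤ Real.sqrt (min (L : ℝ) dff) := by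
      rw [show (1:ℝ) = Real.sqrt 1 by simp]
      apply Real.sqrt_le_sqrt
      rw [le_min_iff]
      constructor <;> exact_mod_cast Nat.one_le_iff_ne_zero.2 (by omega)
    have h2 : frob (layerNorm X) + frob (layerNorm X) * spec W1 * spec W2 ≤
        Real.sqrt ((L : ℝ) * dV) * (1 + Real.sqrt (min (L : ℝ) dff) * spec W1 * spec W2) := by
      rw [hY] at hfY ⊢
      rw [mul_add, mul_one]
      refine add_le_add (le_refl _) ?_
      rw [mul_assoc]
      refine mul_le_mul_of_nonneg_left ?_ hfY
      nlinarith [mul_nonneg hw1 hw2]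
    exact le_trans h1 h2
end
end

section
/- Let X ∈ ℝ^{m×n} with every row standard deviation σ_i(X) positive and set σ_min = min_i σ_i(X). Then the map X ↦ P(X) = diag(σ(X))⁻¹ is Fréchet differentiable at X, and for every direction V ∈ ℝ^{m×n}, ‖DP(X)[V]‖_F ≤ (‖X‖₂/(√n·σ_min³))·‖V‖_F. -/
noncomputable section

open Matrix

attribute [local instance] Matrix.frobeniusNormedAddCommGroup Matrix.frobeniusNormedSpace

lemma centered_apply {m n : ℕ} (Y : Matrix (Fin m) (Fin n) ℝ) (i : Fin m) (j : Fin n) :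
    centered Y i j = Y i j - (n:ℝ)⁻¹ * ∑ k, Y i k := by
  simp [centered, centerC, Matrix.mul_apply, Matrix.sub_apply, Matrix.one_apply, mul_sub,
    Finset.sum_sub_distrib, Finset.mul_sum, Finset.sum_mul, mul_comm]

def centL {m n : ℕ} (i : Fin m) (j : Fin n) : Matrix (Fin m) (Fin n) ℝ →ₗ[ℝ] ℝ where
  toFun Y := centered Y i j
  map_add' A B := by simp [centered, Matrix.add_mul, Matrix.add_apply]
  map_smul' c A := by simp [centered, Matrix.smul_mul, Matrix.smul_apply]

def centCLM {m n : ℕ} (i : Fin m) (j : Fin n) : Matrix (Fin m) (Fin n) ℝ →L[ℝ] ℝ :=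
  LinearMap.toContinuousLinearMap (centL i j)

def qD {m n : ℕ} (X : Matrix (Fin m) (Fin n) ℝ) (i : Fin m) :
    Matrix (Fin m) (Fin n) ℝ →L[ℝ] ℝ :=
  (n:ℝ)⁻¹ • ∑ j, (2 * centered X i j) • centCLM i j

lemma hasFDerivAt_q {m n : ℕ} (X : Matrix (Fin m) (Fin n) ℝ) (i : Fin m) :
    HasFDerivAt (fun Y => (n:ℝ)⁻¹ * ∑ j, centered Y i j ^ 2) (qD X i) X := by
  have h : ∀ j : Fin n, HasFDerivAt (fun Y : Matrix (Fin m) (Fin n) ℝ => centered Y i j ^ 2)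
      ((2 * centered X i j) • centCLM i j) X := by
    intro j
    have hmul := (ContinuousLinearMap.hasFDerivAt (centCLM i j) (x := X)).mul
      (ContinuousLinearMap.hasFDerivAt (centCLM i j) (x := X))
    have h2 : (2 * centered X i j) • centCLM i j
        = centCLM i j X • centCLM i j + centCLM i j X • centCLM i j := by
      have : centCLM i j X = centered X i j := rfl
      rw [this, two_mul, add_smul]
    rw [h2]
    have e : (fun Y : Matrix (Fin m) (Fin n) ℝ => centered Y i j ^ 2)
        = fun Y => centCLM i j Y * centCLM i j Y := by funext Y; rw [pow_two]; rfl
    rw [e]; exact hmul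
  have hsum := HasFDerivAt.fun_sum (fun j (_ : j ∈ Finset.univ) => h j)
  have := hsum.const_mul ((n:ℝ)⁻¹)
  exact this

def gD {m n : ℕ} (X : Matrix (Fin m) (Fin n) ℝ) (i : Fin m) :
    Matrix (Fin m) (Fin n) ℝ →L[ℝ] ℝ :=
  (-(1 / (2 * rowSigma X i ^ 3))) • qD X i

lemma hasFDerivAt_g {m n : ℕ} (X : Matrix (Fin m) (Fin n) ℝ) (i : Fin m)
    (hσ : 0 < rowSigma X i) :
    HasFDerivAt (fun Y => (rowSigma Y i)⁻¹) (gD X i) X := by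
  set t : ℝ := (n:ℝ)⁻¹ * ∑ j, centered X i j ^ 2 with ht
  have hs : rowSigma X i = Real.sqrt t := rfl
  have htpos : 0 < t := by
    by_contra hle
    push_neg at hle
    have : rowSigma X i = 0 := by
      rw [hs]; exact Real.sqrt_eq_zero'.2 hle
    linarith
  have hsqrt : HasDerivAt Real.sqrt (1 / (2 * Real.sqrt t)) t := Real.hasDerivAt_sqrt htpos.ne'
  have hspos : 0 < Real.sqrt t := Real.sqrt_pos.2 htpos
  have hinv : HasDerivAt (fun u => (Real.sqrt u)⁻¹)
      (-(1 / (2 * Real.sqrt t)) / (Real.sqrt t) ^ 2) t := hsqrt.inv hspos.ne'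
  have hcomp := hinv.comp_hasFDerivAt X (hasFDerivAt_q X i)
  have h3 : Real.sqrt t ^ 3 = t * Real.sqrt t := by
    rw [pow_succ, Real.sq_sqrt htpos.le]
  have : (-(1 / (2 * Real.sqrt t)) / (Real.sqrt t) ^ 2) = -(1 / (2 * Real.sqrt t ^ 3)) := by
    rw [h3, Real.sq_sqrt htpos.le]
    field_simp
  rw [this] at hcomp
  exact hcomp

def PD {m n : ℕ} (X : Matrix (Fin m) (Fin n) ℝ) :
    Matrix (Fin m) (Fin n) ℝ →L[ℝ] Matrix (Fin m) (Fin m) ℝ :=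
  (LinearMap.toContinuousLinearMap
    (Matrix.diagonalLinearMap (Fin m) ℝ ℝ)).comp (ContinuousLinearMap.pi (gD X))

lemma hasFDerivAt_P {m n : ℕ} (X : Matrix (Fin m) (Fin n) ℝ)
    (hσ : ∀ i, 0 < rowSigma X i) :
    HasFDerivAt (fun Y : Matrix (Fin m) (Fin n) ℝ => Pmat Y) (PD X) X := by
  have hpi : HasFDerivAt (fun Y (i : Fin m) => (rowSigma Y i)⁻¹)
      (ContinuousLinearMap.pi (gD X)) X :=
    hasFDerivAt_pi.2 fun i => hasFDerivAt_g X i (hσ i)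
  exact ((LinearMap.toContinuousLinearMap
    (Matrix.diagonalLinearMap (Fin m) ℝ ℝ)).hasFDerivAt).comp X hpi

lemma PD_apply {m n : ℕ} (X V : Matrix (Fin m) (Fin n) ℝ) :
    PD X V = Matrix.diagonal (fun i => gD X i V) := rfl

lemma gD_apply {m n : ℕ} (X V : Matrix (Fin m) (Fin n) ℝ) (i : Fin m) :
    gD X i V = -(1/((n:ℝ) * rowSigma X i ^ 3)) * ∑ j, centered X i j * centered V i j := by
  have h1 : gD X i V
      = -(1/(2 * rowSigma X i ^ 3)) * ((n:ℝ)⁻¹ * ∑ j, (2 * centered X i j) * centered V i j) := by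
    simp [gD, qD, centCLM, centL, ContinuousLinearMap.sum_apply, smul_eq_mul]
    exact Or.inl (Or.inl rfl)
  rw [h1, show (∑ j, (2 * centered X i j) * centered V i j)
      = 2 * ∑ j, centered X i j * centered V i j by
    rw [Finset.mul_sum]; exact Finset.sum_congr rfl fun j _ => by ring]
  rw [one_div, one_div, mul_inv, mul_inv]
  ring

lemma center_sq_le {n : ℕ} (v : Fin n → ℝ) :
    ∑ j, (v j - (n:ℝ)⁻¹ * ∑ k, v k) ^ 2 ≤ ∑ j, v j ^ 2 := by
  rcases Nat.eq_zero_or_pos n with h | h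
  · subst h; simp
  have hn : (0:ℝ) < n := by exact_mod_cast h
  have hexp : ∑ j, (v j - (n:ℝ)⁻¹ * ∑ k, v k) ^ 2
      = ∑ j, v j ^ 2 - (n:ℝ)⁻¹ * (∑ k, v k) ^ 2 := by
    have hc : ∀ j : Fin n, (v j - (n:ℝ)⁻¹ * ∑ k, v k) ^ 2
        = v j ^ 2 - (2 * ((n:ℝ)⁻¹ * ∑ k, v k)) * v j + ((n:ℝ)⁻¹ * ∑ k, v k) ^ 2 :=
      fun j => by ring
    rw [Finset.sum_congr rfl fun j _ => hc j]
    rw [Finset.sum_add_distrib, Finset.sum_sub_distrib, ← Finset.mul_sum,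
      Finset.sum_const, Finset.card_univ, Fintype.card_fin, nsmul_eq_mul]
    field_simp
    ring
  rw [hexp]
  have h0 : 0 ≤ (n:ℝ)⁻¹ * (∑ k, v k) ^ 2 := by positivity
  linarith

lemma sum_c_sq {m n : ℕ} (X : Matrix (Fin m) (Fin n) ℝ) (i : Fin m) :
    ∑ j, centered X i j ^ 2 = (n:ℝ) * rowSigma X i ^ 2 := by
  rcases Nat.eq_zero_or_pos n with h | h
  · subst h; simp
  have hn : ((n:ℝ)) ≠ 0 := by positivity
  have h0 : (0:ℝ) ≤ (n:ℝ)⁻¹ * ∑ j, centered X i j ^ 2 := by positivity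
  have h1 : rowSigma X i ^ 2 = (n:ℝ)⁻¹ * ∑ j, centered X i j ^ 2 := Real.sq_sqrt h0
  rw [h1]
  field_simp

set_option maxHeartbeats 1000000 in
lemma mulVec_bound {m n : ℕ} (X : Matrix (Fin m) (Fin n) ℝ) (u : Fin n → ℝ) :
    ∑ i, (X.mulVec u i) ^ 2 ≤ spec X ^ 2 * ∑ j, (u j) ^ 2 := by
  set T := LinearMap.toContinuousLinearMap (Matrix.toEuclideanLin X) with hT
  set u' : EuclideanSpace ℝ (Fin n) := (WithLp.equiv 2 (Fin n → ℝ)).symm u with hu'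
  have h1 : ‖T u'‖ ≤ ‖T‖ * ‖u'‖ := T.le_opNorm u'
  have h2 : ‖u'‖ = Real.sqrt (∑ j, (u j) ^ 2) := by
    rw [EuclideanSpace.norm_eq]
    congr 1
    exact Finset.sum_congr rfl fun j _ => by
      rw [hu']; simp [Real.norm_eq_abs, sq_abs, WithLp.equiv_symm_apply, PiLp.toLp_apply]
  have h3 : ‖T u'‖ = Real.sqrt (∑ i, (X.mulVec u i) ^ 2) := by
    have hTu : T u' = (WithLp.equiv 2 (Fin m → ℝ)).symm (X.mulVec u) := by
      rw [hT, hu']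
      rfl
    rw [hTu, EuclideanSpace.norm_eq]
    congr 1
    exact Finset.sum_congr rfl fun i _ => by
      simp [Real.norm_eq_abs, sq_abs, WithLp.equiv_symm_apply, PiLp.toLp_apply]
  have hTn : (0:ℝ) ≤ ‖T‖ := norm_nonneg _
  have hA : (0:ℝ) ≤ ∑ i, (X.mulVec u i) ^ 2 := by positivity
  have hB : (0:ℝ) ≤ ∑ j, (u j) ^ 2 := by positivity
  have hspec : spec X = ‖T‖ := rfl
  rw [hspec]
  have h1' : Real.sqrt (∑ i, (X.mulVec u i) ^ 2) ≤ ‖T‖ * Real.sqrt (∑ j, (u j) ^ 2) := by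
    rw [← h3, ← h2]; exact h1
  have h9 := mul_self_le_mul_self (Real.sqrt_nonneg (∑ i, (X.mulVec u i) ^ 2)) h1'
  rw [Real.mul_self_sqrt hA] at h9
  have h10 : (‖T‖ * Real.sqrt (∑ j, (u j) ^ 2)) * (‖T‖ * Real.sqrt (∑ j, (u j) ^ 2))
      = ‖T‖ ^ 2 * ∑ j, (u j) ^ 2 := by
    rw [show (‖T‖ * Real.sqrt (∑ j, (u j) ^ 2)) * (‖T‖ * Real.sqrt (∑ j, (u j) ^ 2))
        = ‖T‖ ^ 2 * (Real.sqrt (∑ j, (u j) ^ 2) * Real.sqrt (∑ j, (u j) ^ 2)) from by ring,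
      Real.mul_self_sqrt hB]
  linarith [h9, h10.le, h10.ge]

lemma centerC_mulVec {n : ℕ} (v : Fin n → ℝ) (j : Fin n) :
    (centerC n).mulVec v j = v j - (n:ℝ)⁻¹ * ∑ k, v k := by
  simp [centerC, Matrix.mulVec, dotProduct, Matrix.sub_apply, Matrix.one_apply, sub_mul,
    Finset.sum_sub_distrib, Finset.mul_sum, ite_mul]

lemma sigma_le_spec {m n : ℕ} (X : Matrix (Fin m) (Fin n) ℝ) (i : Fin m)
    (hs : 0 < rowSigma X i) : rowSigma X i ≤ spec X := by
  set s := rowSigma X i with hsdef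
  set v : Fin n → ℝ := fun j => centered X i j with hv
  set t : ℝ := ∑ j, v j ^ 2 with ht0
  have ht : t = (n:ℝ) * s ^ 2 := sum_c_sq X i
  have hq : 0 < (n:ℝ)⁻¹ * ∑ j, centered X i j ^ 2 := Real.sqrt_pos.mp hs
  have hcsq : (0:ℝ) ≤ ∑ j, centered X i j ^ 2 := by positivity
  have hninv : (0:ℝ) < (n:ℝ)⁻¹ := by nlinarith
  have hnR : (0:ℝ) < (n:ℝ) := inv_pos.mp hninv
  have hn0 : 0 < n := by exact_mod_cast hnR
  have hn' : (1:ℝ) ≤ (n:ℝ) := by exact_mod_cast hn0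
  have htpos : 0 < t := by rw [ht]; exact mul_pos hnR (pow_pos hs 2)
  set u : Fin n → ℝ := (centerC n).mulVec v with hu
  have husq : ∑ j, u j ^ 2 ≤ t := by
    rw [ht0]
    have : ∀ j, u j = v j - (n:ℝ)⁻¹ * ∑ k, v k := fun j => centerC_mulVec v j
    calc ∑ j, u j ^ 2 = ∑ j, (v j - (n:ℝ)⁻¹ * ∑ k, v k) ^ 2 :=
          Finset.sum_congr rfl fun j _ => by rw [this j]
      _ ≤ ∑ j, v j ^ 2 := center_sq_le v
  have hw : X.mulVec u = (centered X).mulVec v := by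
    rw [hu, Matrix.mulVec_mulVec]; rfl
  have hwi : X.mulVec u i = t := by
    rw [hw, ht0]
    simp only [Matrix.mulVec, dotProduct]
    exact Finset.sum_congr rfl fun j _ => by rw [hv]; ring
  have h4 : t ^ 2 ≤ ∑ i', (X.mulVec u i') ^ 2 := by
    rw [← hwi]
    exact Finset.single_le_sum (f := fun i' => (X.mulVec u i') ^ 2)
      (fun i' _ => sq_nonneg _) (Finset.mem_univ i)
  have hb := mulVec_bound X u
  have hspec0 : (0:ℝ) ≤ spec X := norm_nonneg _
  have h5 : t ≤ spec X ^ 2 := by nlinarith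
  have h6 : s ^ 2 ≤ t := by rw [ht]; nlinarith
  nlinarith

lemma frob_diag {m : ℕ} (d : Fin m → ℝ) :
    frob (Matrix.diagonal d) = Real.sqrt (∑ i, d i ^ 2) := by
  unfold frob
  congr 1
  refine Finset.sum_congr rfl fun i _ => ?_
  rw [Finset.sum_eq_single i]
  · simp
  · intro b _ hb
    simp [Matrix.diagonal_apply, Ne.symm hb]
  · simp


/-- With `σ_min = min_i σᵢ(X) > 0`, the map `X ↦ P(X) = diag(σ(X))⁻¹`
is Fréchet differentiable at `X` and `‖DP(X)[V]‖_F ≤ (‖X‖₂/(√n·σ_min³))·‖V‖_F`. -/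
theorem P_derivative_norm_bound {m n : ℕ} (hm : 0 < m)
    (X : Matrix (Fin m) (Fin n) ℝ) (hσ : ∀ i, 0 < rowSigma X i) :
    DifferentiableAt ℝ (fun Y : Matrix (Fin m) (Fin n) ℝ => Pmat Y) X ∧
    ∀ V : Matrix (Fin m) (Fin n) ℝ,
      frob (fderiv ℝ (fun Y : Matrix (Fin m) (Fin n) ℝ => Pmat Y) X V) ≤
        spec X / (Real.sqrt n * (⨅ i, rowSigma X i) ^ 3) * frob V := by
  have hP := hasFDerivAt_P X hσ
  refine ⟨hP.differentiableAt, ?_⟩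
  intro V
  rw [hP.fderiv]
  haveI : Nonempty (Fin m) := ⟨⟨0, hm⟩⟩
  -- positivity of n
  have i0 : Fin m := ⟨0, hm⟩
  have hq0 : 0 < (n:ℝ)⁻¹ * ∑ j, centered X i0 j ^ 2 := Real.sqrt_pos.mp (hσ i0)
  have hcsq0 : (0:ℝ) ≤ ∑ j, centered X i0 j ^ 2 := by positivity
  have hninv : (0:ℝ) < (n:ℝ)⁻¹ := by nlinarith
  have hnR : (0:ℝ) < (n:ℝ) := inv_pos.mp hninv
  -- the infimum
  set σm : ℝ := ⨅ i, rowSigma X i with hσm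
  have hbdd : BddBelow (Set.range fun i => rowSigma X i) :=
    Set.Finite.bddBelow (Set.finite_range _)
  have hσle : ∀ i, σm ≤ rowSigma X i := fun i => ciInf_le hbdd i
  obtain ⟨imin, himin⟩ := Finite.exists_min fun i => rowSigma X i
  have hσge : rowSigma X imin ≤ σm := le_ciInf himin
  have hσpos : 0 < σm := lt_of_lt_of_le (hσ imin) hσge
  have hσspec : σm ≤ spec X :=
    le_trans (hσle imin) (sigma_le_spec X imin (hσ imin))
  have hspec0 : (0:ℝ) ≤ spec X := norm_nonneg _
  -- entrywise bound on the derivative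
  have key : ∀ i, (gD X i V) ^ 2 ≤ (∑ j, centered V i j ^ 2) / ((n:ℝ) * σm ^ 4) := by
    intro i
    set s : ℝ := rowSigma X i with hsdef
    have hspos : 0 < s := hσ i
    set T : ℝ := ∑ j, centered X i j * centered V i j with hT
    set W : ℝ := ∑ j, centered V i j ^ 2 with hW
    have hWnn : 0 ≤ W := by rw [hW]; positivity
    have hCS : T ^ 2 ≤ ((n:ℝ) * s ^ 2) * W := by
      have := Finset.sum_mul_sq_le_sq_mul_sq Finset.univ
        (fun j => centered X i j) (fun j => centered V i j)
      rw [hT, hW, ← sum_c_sq X i]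
      exact this
    have hn' : (n:ℝ) ≠ 0 := ne_of_gt hnR
    have hs' : s ≠ 0 := ne_of_gt hspos
    have e1 : (gD X i V) ^ 2 = T ^ 2 / ((n:ℝ) ^ 2 * s ^ 6) := by
      rw [gD_apply, ← hT, ← hsdef,
        show -(1/((n:ℝ) * s ^ 3)) * T = -(T/((n:ℝ) * s ^ 3)) from by ring,
        neg_sq, div_pow, mul_pow, ← pow_mul]
    rw [e1]
    have hden : (0:ℝ) < (n:ℝ) ^ 2 * s ^ 6 := by positivity
    have step1 : T ^ 2 / ((n:ℝ) ^ 2 * s ^ 6) ≤ ((n:ℝ) * s ^ 2 * W) / ((n:ℝ) ^ 2 * s ^ 6) :=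
      (div_le_div_iff_of_pos_right hden).mpr hCS
    have step2 : ((n:ℝ) * s ^ 2 * W) / ((n:ℝ) ^ 2 * s ^ 6) = W / ((n:ℝ) * s ^ 4) := by
      field_simp
    have step3 : W / ((n:ℝ) * s ^ 4) ≤ W / ((n:ℝ) * σm ^ 4) := by
      apply div_le_div_of_nonneg_left hWnn (by positivity)
      have h44 : σm ^ 4 ≤ s ^ 4 := by
        apply pow_le_pow_left₀ hσpos.le (hσle i)
      nlinarith
    calc T ^ 2 / ((n:ℝ) ^ 2 * s ^ 6) ≤ ((n:ℝ) * s ^ 2 * W) / ((n:ℝ) ^ 2 * s ^ 6) := step1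
      _ = W / ((n:ℝ) * s ^ 4) := step2
      _ ≤ W / ((n:ℝ) * σm ^ 4) := step3
  have hsum : ∑ i, (gD X i V) ^ 2 ≤ (∑ i, ∑ j, V i j ^ 2) / ((n:ℝ) * σm ^ 4) := by
    have hdenpos : (0:ℝ) < (n:ℝ) * σm ^ 4 := by positivity
    calc ∑ i, (gD X i V) ^ 2 ≤ ∑ i, (∑ j, centered V i j ^ 2) / ((n:ℝ) * σm ^ 4) :=
          Finset.sum_le_sum fun i _ => key i
      _ = (∑ i, ∑ j, centered V i j ^ 2) / ((n:ℝ) * σm ^ 4) := by rw [Finset.sum_div]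
      _ ≤ (∑ i, ∑ j, V i j ^ 2) / ((n:ℝ) * σm ^ 4) := by
          apply (div_le_div_iff_of_pos_right hdenpos).mpr
          apply Finset.sum_le_sum
          intro i _
          calc ∑ j, centered V i j ^ 2 = ∑ j, (V i j - (n:ℝ)⁻¹ * ∑ k, V i k) ^ 2 :=
                Finset.sum_congr rfl fun j _ => by rw [centered_apply]
            _ ≤ ∑ j, V i j ^ 2 := center_sq_le (fun j => V i j)
  have hfrob : frob (PD X V) = Real.sqrt (∑ i, (gD X i V) ^ 2) := by
    rw [PD_apply, frob_diag]
  rw [hfrob]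
  have h1 : Real.sqrt (∑ i, (gD X i V) ^ 2)
      ≤ Real.sqrt ((∑ i, ∑ j, V i j ^ 2) / ((n:ℝ) * σm ^ 4)) := Real.sqrt_le_sqrt hsum
  have h2 : Real.sqrt ((∑ i, ∑ j, V i j ^ 2) / ((n:ℝ) * σm ^ 4))
      = frob V / (Real.sqrt n * σm ^ 2) := by
    rw [Real.sqrt_div (by positivity : (0:ℝ) ≤ ∑ i, ∑ j, V i j ^ 2)]
    rw [Real.sqrt_mul (by positivity : (0:ℝ) ≤ (n:ℝ)),
      show σm ^ 4 = (σm ^ 2) ^ 2 from by ring, Real.sqrt_sq (by positivity)]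
    rfl
  have hfV : 0 ≤ frob V := Real.sqrt_nonneg _
  have hsqn : (0:ℝ) < Real.sqrt n := Real.sqrt_pos.mpr hnR
  have hratio : 1 / (Real.sqrt n * σm ^ 2) ≤ spec X / (Real.sqrt n * σm ^ 3) := by
    rw [div_le_div_iff₀ (by positivity) (by positivity)]
    have := mul_le_mul_of_nonneg_right hσspec
      (by positivity : (0:ℝ) ≤ Real.sqrt n * σm ^ 2)
    nlinarith [this]
  have hfinal : frob V / (Real.sqrt n * σm ^ 2)
      ≤ spec X / (Real.sqrt n * σm ^ 3) * frob V := by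
    rw [show frob V / (Real.sqrt n * σm ^ 2)
        = (1 / (Real.sqrt n * σm ^ 2)) * frob V from by ring]
    exact mul_le_mul_of_nonneg_right hratio hfV
  calc Real.sqrt (∑ i, (gD X i V) ^ 2)
      ≤ Real.sqrt ((∑ i, ∑ j, V i j ^ 2) / ((n:ℝ) * σm ^ 4)) := h1
    _ = frob V / (Real.sqrt n * σm ^ 2) := h2
    _ ≤ spec X / (Real.sqrt n * σm ^ 3) * frob V := hfinal
end
end
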